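/- Let F be the standard Laplace cumulative distribution function, F(x) = 1/2 + (1/2) sgn(x) (1 − e^{−|x|}). Then for every threshold τ ≥ 0 and observation y ∈ ℝ, writing v = max(y, τ): twCRPS_τ(F, y) = v − τ + e^{−v} + (1/8) e^{−2τ} − e^{−τ}. -/

import Mathlib

open MeasureTheory Set

/-- Threshold-weighted CRPS: `twCRPS_τ(F, y) = ∫_τ^∞ (F(z) − 𝟙{z ≥ y})² dz`. -/
noncomputable def twCRPS (F : ℝ → ℝ) (τ y : ℝ) : ℝ :=
  ∫ z in Set.Ioi τ, (F z - if y ≤ z then (1 : ℝ) else 0) ^ 2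

/-- Standard Laplace CDF `F(x) = 1/2 + (1/2) sgn(x) (1 − e^{−|x|})`. -/
noncomputable def laplaceCDF (x : ℝ) : ℝ :=
  1 / 2 + 1 / 2 * Real.sign x * (1 - Real.exp (-|x|))

lemma exp_neg_sq (z : ℝ) : Real.exp (-z) ^ 2 = Real.exp (-2 * z) := by
  rw [sq, ← Real.exp_add]; ring_nf

lemma hasDerivAt_exp_neg (z : ℝ) :
    HasDerivAt (fun x : ℝ => Real.exp (-x)) (-Real.exp (-z)) z := by
  simpa using ((hasDerivAt_id z).neg.exp)

theorem twCRPS_laplace_nonneg_threshold (τ y : ℝ) (hτ : 0 ≤ τ) :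
    twCRPS laplaceCDF τ y =
      max y τ - τ + Real.exp (-(max y τ)) + 1 / 8 * Real.exp (-2 * τ)
        - Real.exp (-τ) := by
  set v := max y τ with hv
  have hτv : τ ≤ v := le_max_right y τ
  have hyv : y ≤ v := le_max_left y τ
  set g : ℝ → ℝ := fun z =>
    if y ≤ z then (Real.exp (-z) / 2) ^ 2 else (1 - Real.exp (-z) / 2) ^ 2 with hg
  set f : ℝ → ℝ := fun z => (1 - Real.exp (-z) / 2) ^ 2 with hf
  have hfc : Continuous f := by fun_prop
  -- step 1: rewrite the integrand on Ioi τ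
  have hstep1 : twCRPS laplaceCDF τ y = ∫ z in Ioi τ, g z := by
    refine setIntegral_congr_fun (measurableSet_Ioi) (fun z hz => ?_)
    have hz0 : 0 < z := lt_of_le_of_lt hτ hz
    have hF : laplaceCDF z = 1 - Real.exp (-z) / 2 := by
      rw [laplaceCDF, Real.sign_of_pos hz0, abs_of_pos hz0]; ring
    rw [hF, hg]
    by_cases h : y ≤ z <;> simp [h] <;> ring
  -- on Ioi v, g is the exponential tail
  have hInt2 : IntegrableOn (fun z : ℝ => (Real.exp (-z) / 2) ^ 2) (Ioi v) := by
    have : IntegrableOn (fun z : ℝ => Real.exp (-2 * z)) (Ioi v) :=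
      exp_neg_integrableOn_Ioi v (by norm_num)
    have h4 : IntegrableOn (fun z : ℝ => Real.exp (-2 * z) / 4) (Ioi v) :=
      this.div_const 4
    refine h4.congr_fun (fun z _ => ?_) measurableSet_Ioi
    beta_reduce; rw [← exp_neg_sq]; ring
  have hgv : ∀ z ∈ Ioi v, g z = (Real.exp (-z) / 2) ^ 2 := fun z hz => by
    rw [hg]; simp [le_of_lt (lt_of_le_of_lt hyv hz)]
  have hIntIoi : IntegrableOn g (Ioi v) :=
    hInt2.congr_fun (fun z hz => (hgv z hz).symm) measurableSet_Ioi
  -- on Ioc τ v, g = f a.e.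
  have hae : g =ᵐ[volume.restrict (Ioc τ v)] f := by
    have h1 : ∀ᵐ z ∂(volume.restrict (Ioc τ v)), z ≠ y := by
      refine ae_mono Measure.restrict_le_self ?_
      exact (ae_iff.2 (by simpa using Real.volume_singleton (a := y)))
    filter_upwards [ae_restrict_mem measurableSet_Ioc, h1] with z hz hzy
    rw [hg, hf]
    have : ¬ y ≤ z := fun h =>
      absurd hz.2 (not_le.2 (max_lt (lt_of_le_of_ne h (Ne.symm hzy)) hz.1))
    simp [this]
  have hIntIoc : IntegrableOn g (Ioc τ v) :=
    (hfc.integrableOn_Ioc).congr hae.symm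
  have hsplit : (∫ z in Ioi τ, g z) = (∫ z in Ioc τ v, g z) + ∫ z in Ioi v, g z := by
    rw [← Ioc_union_Ioi_eq_Ioi hτv]
    exact setIntegral_union (Ioc_disjoint_Ioi le_rfl) measurableSet_Ioi hIntIoc hIntIoi
  have hmid : (∫ z in Ioc τ v, g z) = (v + Real.exp (-v) - Real.exp (-v) ^ 2 / 8)
      - (τ + Real.exp (-τ) - Real.exp (-τ) ^ 2 / 8) := by
    rw [integral_congr_ae hae, ← intervalIntegral.integral_of_le hτv]
    have hd : ∀ z ∈ Set.uIcc τ v,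
        HasDerivAt (fun x => x + Real.exp (-x) - Real.exp (-x) ^ 2 / 8) (f z) z := by
      intro z _
      have := ((hasDerivAt_id z).add (hasDerivAt_exp_neg z)).sub
        (((hasDerivAt_exp_neg z).pow 2).div_const 8)
      refine this.congr_deriv ?_
      simp only [hf]; push_cast; ring
    rw [intervalIntegral.integral_eq_sub_of_hasDerivAt hd (hfc.intervalIntegrable _ _)]
  have htend : Filter.Tendsto (fun x : ℝ => -(Real.exp (-x) ^ 2 / 8)) Filter.atTop
      (nhds 0) := by
    have := ((Real.tendsto_exp_neg_atTop_nhds_zero.pow 2).neg.div_const (8:ℝ))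
    simpa [neg_div] using this
  have htail : (∫ z in Ioi v, g z) = Real.exp (-v) ^ 2 / 8 := by
    rw [setIntegral_congr_fun measurableSet_Ioi hgv]
    have hd : ∀ z ∈ Ici v,
        HasDerivAt (fun x => -(Real.exp (-x) ^ 2 / 8)) ((Real.exp (-z) / 2) ^ 2) z := by
      intro z _
      have := (((hasDerivAt_exp_neg z).pow 2).div_const 8).neg
      refine this.congr_deriv ?_
      push_cast
      ring
    rw [integral_Ioi_of_hasDerivAt_of_tendsto' hd hInt2 htend]
    ring
  rw [hstep1, hsplit, hmid, htail, ← exp_neg_sq]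
  ring
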